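/- Consider any broadcasted party-list election E = (N, C, k, l, A, L) with parties P_1, …, P_g whose popularities are strictly decreasing (n_1 > n_2 > … > n_g), in which |P_1| ≥ k, every party has at least l candidates (|P_i| ≥ l for all i), and g · l ≥ k. Then the PAV-improvement of LV over AV equals IMP_PAV(E) = (Σ_{i=1}^{⌊k/l⌋} n_i · H_l + n_{⌈k/l⌉} · H_{k mod l}) / (n_1 · H_k), where the term n_{⌈k/l⌉} · H_{k mod l} is taken to be 0 when l divides k. -/

import Mathlib

open Finset

lemma abel_id (n b : ℕ → ℕ) (hn : ∀ j, n (j+1) ≤ n j) :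
    ∀ g, ∑ j ∈ range g, n j * b j
      = (∑ j ∈ range g, (n j - n (j+1)) * (∑ i ∈ range (j+1), b i))
        + n g * ∑ i ∈ range g, b i := by
  intro g
  induction g with
  | zero => simp
  | succ g ih =>
    rw [sum_range_succ (fun j => n j * b j), ih, sum_range_succ (fun j => (n j - n (j+1)) * _)]
    have h1 : (n g - n (g+1)) * (∑ i ∈ range (g+1), b i) + n (g+1) * ∑ i ∈ range (g+1), b i
        = n g * ∑ i ∈ range (g+1), b i := by
      rw [← add_mul, Nat.sub_add_cancel (hn g)]
    have h2 : n g * ∑ i ∈ range (g+1), b i = n g * ∑ i ∈ range g, b i + n g * b g := by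
      rw [sum_range_succ, Nat.mul_add]
    omega

lemma score_le (g : ℕ) (n b b' : ℕ → ℕ) (hn : ∀ j, n (j+1) ≤ n j) (hg0 : n g = 0)
    (hdom : ∀ m, m ≤ g → ∑ i ∈ range m, b i ≤ ∑ i ∈ range m, b' i) :
    ∑ j ∈ range g, n j * b j ≤ ∑ j ∈ range g, n j * b' j := by
  rw [abel_id n b hn g, abel_id n b' hn g, hg0, zero_mul, zero_mul, add_zero, add_zero]
  exact sum_le_sum fun j hj => Nat.mul_le_mul_left _ (hdom (j+1) (mem_range.1 hj))

lemma score_lt (g : ℕ) (n b b' : ℕ → ℕ) (hn : ∀ j, n (j+1) ≤ n j) (hg0 : n g = 0)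
    (hns : ∀ j, j < g → n (j+1) < n j)
    (hdom : ∀ m, m ≤ g → ∑ i ∈ range m, b i ≤ ∑ i ∈ range m, b' i)
    (j0 : ℕ) (hj0g : j0 < g) (hne : b j0 ≠ b' j0) :
    ∑ j ∈ range g, n j * b j < ∑ j ∈ range g, n j * b' j := by
  classical
  have hex : ∃ m, m < g ∧ b m ≠ b' m := ⟨j0, hj0g, hne⟩
  set m := Nat.find hex with hm'
  obtain ⟨hmg, hmne⟩ : m < g ∧ b m ≠ b' m := Nat.find_spec hex
  have hmin : ∀ i, i < m → b i = b' i := by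
    intro i hi
    have h := Nat.find_min hex hi
    push_neg at h
    exact h (hi.trans hmg)
  have hpre : ∑ i ∈ range m, b i = ∑ i ∈ range m, b' i :=
    sum_congr rfl fun i hi => hmin i (mem_range.1 hi)
  have hstrict : ∑ i ∈ range (m+1), b i < ∑ i ∈ range (m+1), b' i := by
    have h := hdom (m+1) hmg
    rw [sum_range_succ, sum_range_succ, hpre] at h ⊢
    omega
  rw [abel_id n b hn g, abel_id n b' hn g, hg0, zero_mul, zero_mul, add_zero, add_zero]
  apply sum_lt_sum
  · exact fun j hj => Nat.mul_le_mul_left _ (hdom (j+1) (mem_range.1 hj))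
  · refine ⟨m, mem_range.2 hmg, ?_⟩
    have hc : 0 < n m - n (m+1) := by have := hns m hmg; omega
    exact mul_lt_mul_of_pos_left hstrict hc

lemma bstar_prefix (l k : ℕ) (hl : 0 < l) (m : ℕ) :
    ∑ i ∈ range m, (if i < k / l then l else if i = k / l then k % l else 0)
      = min (m * l) k := by
  induction m with
  | zero => simp
  | succ m ih =>
    rw [sum_range_succ, ih]
    have hdm : l * (k / l) + k % l = k := Nat.div_add_mod k l
    have hml : (m+1) * l = m * l + l := by ring
    have hmod : k % l < l := Nat.mod_lt _ hl
    rcases lt_trichotomy m (k / l) with h | h | h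
    · have h1 : (m+1) * l ≤ (k/l) * l := Nat.mul_le_mul_right l (by omega)
      have h2 : k / l * l ≤ k := Nat.div_mul_le_self k l
      have h3 : k / l * l = l * (k / l) := Nat.mul_comm _ _
      simp only [if_pos h]
      omega
    · subst h
      have h2 : k / l * l ≤ k := Nat.div_mul_le_self k l
      have h3 : k / l * l = l * (k / l) := Nat.mul_comm _ _
      have h4 : (k/l + 1) * l = k/l * l + l := by ring
      rw [if_neg (lt_irrefl (k/l)), if_pos rfl]
      omega
    · have h1 : (k/l + 1) * l ≤ m * l := Nat.mul_le_mul_right l (by omega)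
      have h3 : (k/l + 1) * l = l * (k / l) + l := by ring
      simp only [if_neg (by omega : ¬ m < k / l), if_neg (by omega : ¬ m = k / l)]
      omega


/-- An election `E = (N, C, k, l, A, L)`: voters form the finite type `V`,
candidates the finite type `C`, `k` is the committee size, `l` the ballot limit,
`A i` is the approval set of voter `i` and `L i` their ballot. -/
structure Election (V C : Type*) [Fintype V] [DecidableEq V] [Fintype C] [DecidableEq C] where
  k : ℕ
  l : ℕ
  A : V → Finset C
  L : V → Finset C
  k_le_card : k ≤ Fintype.card C
  one_le_l : 1 ≤ l
  l_le_k : l ≤ k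
  ballot_card : ∀ i, (L i).card = l
  ballot_sub_approval : ∀ i, l ≤ (A i).card → L i ⊆ A i
  approval_ssub_ballot : ∀ i, (A i).card < l → A i ⊂ L i

variable {V C : Type*} [Fintype V] [DecidableEq V] [Fintype C] [DecidableEq C]

/-- The LV-score of a candidate: the number of voters whose ballot contains it. -/
def sLVc (E : Election V C) (c : C) : ℕ := (univ.filter fun i => c ∈ E.L i).card

/-- The AV-score of a candidate: the number of voters approving it. -/
def sAVc (E : Election V C) (c : C) : ℕ := (univ.filter fun i => c ∈ E.A i).card

/-- The LV-score of a committee. -/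
def sLV (E : Election V C) (W : Finset C) : ℕ := ∑ c ∈ W, sLVc E c

/-- The AV-score of a committee. -/
def sAV (E : Election V C) (W : Finset C) : ℕ := ∑ c ∈ W, sAVc E c

/-- The winning committees of Limited Voting: size-`k` committees maximizing the LV-score. -/
def LVwin (E : Election V C) : Set (Finset C) :=
  {W | W.card = E.k ∧ ∀ W' : Finset C, W'.card = E.k → sLV E W' ≤ sLV E W}

/-- The winning committees of Approval Voting: size-`k` committees maximizing the AV-score. -/
def AVwin (E : Election V C) : Set (Finset C) :=
  {W | W.card = E.k ∧ ∀ W' : Finset C, W'.card = E.k → sAV E W' ≤ sAV E W}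

/-- The Chamberlin–Courant score of a committee: the number of represented voters. -/
def sCC (E : Election V C) (W : Finset C) : ℕ :=
  (univ.filter fun i => (W ∩ E.A i).Nonempty).card

/-- `A` is a party-list profile: approval sets are nonempty and pairwise equal or disjoint. -/
def PartyList (E : Election V C) : Prop :=
  (∀ i, (E.A i).Nonempty) ∧ ∀ i j : V, E.A i = E.A j ∨ E.A i ∩ E.A j = ∅

/-- `E` is consistent with some broadcasting (linear) order on candidates, encoded by an
injective priority function `f` (`f c < f c'` meaning `c ≻ c'`). -/
def Broadcasted (E : Election V C) : Prop :=
  ∃ f : C → ℕ, Function.Injective f ∧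
    ∀ (i : V) (c c' : C), c ∈ E.A i → c' ∈ E.A i → c ∈ E.L i → c' ∉ E.L i → f c < f c'

/-- The number of voters of party `Pj`. -/
def nParty (E : Election V C) (Pj : Finset C) : ℕ := (univ.filter fun i => E.A i = Pj).card

/-- The harmonic number `H_t = Σ_{j=1}^t 1/j` (with `H_0 = 0`). -/
noncomputable def harm (t : ℕ) : ℝ := ∑ j ∈ Finset.range t, (1 : ℝ) / (j + 1)

/-- The PAV-score of a committee. -/
noncomputable def sPAV (E : Election V C) (W : Finset C) : ℝ :=
  ∑ i : V, harm ((W ∩ E.A i).card)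

/-- In a broadcasted party-list election with strictly decreasing party
popularities, `|P_1| ≥ k`, every party having at least `l` candidates, and `g · l ≥ k`,
the PAV-improvement of LV over AV equals
`(Σ_{i=1}^{⌊k/l⌋} n_i · H_l + n_{⌈k/l⌉} · H_{k mod l}) / (n_1 · H_k)`
(the second summand being 0 when `l ∣ k`, since `H_0 = 0`).
Here `jc` denotes the party with (1-based) index `⌈k/l⌉`. -/
theorem stmt10 (E : Election V C) (hPL : PartyList E) (hB : Broadcasted E)
    (g : ℕ) (hg : 0 < g) (P : Fin g → Finset C)
    (hPall : ∀ i : V, ∃ j, E.A i = P j)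
    (hPrep : ∀ j, ∃ i : V, E.A i = P j)
    (hanti : ∀ j j' : Fin g, j < j' → nParty E (P j') < nParty E (P j))
    (hPl : ∀ j, E.l ≤ (P j).card)
    (hP1 : E.k ≤ (P ⟨0, hg⟩).card)
    (hgl : E.k ≤ g * E.l)
    (jc : Fin g) (hjc : (jc : ℕ) + 1 = (E.k + E.l - 1) / E.l) :
    sInf (sPAV E '' LVwin E) / sSup (sPAV E '' AVwin E) =
      ((∑ j ∈ univ.filter (fun j : Fin g => (j : ℕ) < E.k / E.l),
          (nParty E (P j) : ℝ) * harm E.l) +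
        (nParty E (P jc) : ℝ) * harm (E.k % E.l)) /
      ((nParty E (P ⟨0, hg⟩) : ℝ) * harm E.k) := by
  classical
  obtain ⟨f, hfinj, hf⟩ := hB
  have hl0 : 0 < E.l := E.one_le_l
  set q := E.k / E.l with hq
  set r := E.k % E.l with hr
  have hrl : r < E.l := Nat.mod_lt _ hl0
  have hdm : E.l * q + r = E.k := Nat.div_add_mod E.k E.l
  -- basic party facts
  have hPne : ∀ j j' : Fin g, j ≠ j' → P j ≠ P j' := by
    intro j j' hne heq
    rcases Ne.lt_or_gt hne with h | h
    · have := hanti j j' h; rw [heq] at this; exact lt_irrefl _ this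
    · have := hanti j' j h; rw [heq] at this; exact lt_irrefl _ this
  have hPinj : ∀ {a b : Fin g}, P a = P b → a = b := by
    intro a b h; by_contra hne; exact hPne a b hne h
  have hPdisj : ∀ j j' : Fin g, j ≠ j' → P j ∩ P j' = ∅ := by
    intro j j' hne
    obtain ⟨i, hi⟩ := hPrep j
    obtain ⟨i', hi'⟩ := hPrep j'
    rcases hPL.2 i i' with h | h
    · exact absurd (by rw [← hi, ← hi', h]) (hPne j j' hne)
    · rw [← hi, ← hi']; exact h
  choose pidx hpidx using hPall
  have hAcard : ∀ i, E.l ≤ (E.A i).card := fun i => by rw [hpidx i]; exact hPl _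
  have hLsub : ∀ i, E.L i ⊆ E.A i := fun i => E.ballot_sub_approval i (hAcard i)
  -- all voters of a party cast the same ballot
  have hLeq : ∀ i i', E.A i = E.A i' → E.L i = E.L i' := by
    intro i i' hA
    refine Finset.eq_of_subset_of_card_le ?_ (by rw [E.ballot_card, E.ballot_card])
    intro c hc
    by_contra hc'
    have hne : ¬ (E.L i' ⊆ E.L i) := by
      intro hsub
      have : E.L i' = E.L i :=
        Finset.eq_of_subset_of_card_le hsub (by rw [E.ballot_card, E.ballot_card])
      exact hc' (this ▸ hc)
    obtain ⟨c', hc'1, hc'2⟩ := Finset.not_subset.1 hne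
    have hcA : c ∈ E.A i := hLsub i hc
    have hc'A : c' ∈ E.A i := by rw [hA]; exact hLsub i' hc'1
    have hcA' : c ∈ E.A i' := by rw [← hA]; exact hcA
    have h1 := hf i c c' hcA hc'A hc hc'2
    have h2 := hf i' c' c (hLsub i' hc'1) hcA' hc'1 hc'
    omega
  choose rep hrep using hPrep
  set B : Fin g → Finset C := fun j => E.L (rep j) with hB'
  have hLB : ∀ i, E.L i = B (pidx i) := fun i => hLeq i (rep (pidx i)) (by rw [hpidx i, hrep])
  have hBsub : ∀ j, B j ⊆ P j := fun j => by rw [← hrep j]; exact hLsub (rep j)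
  have hBcard : ∀ j, (B j).card = E.l := fun j => E.ballot_card (rep j)
  have hBdisj : ∀ j j' : Fin g, j ≠ j' → Disjoint (B j) (B j') := by
    intro j j' h
    have := hPdisj j j' h
    exact (Finset.disjoint_left.2 fun c hc hc' => by
      have : c ∈ P j ∩ P j' := mem_inter.2 ⟨hBsub j hc, hBsub j' hc'⟩
      rw [hPdisj j j' h] at this
      exact absurd this (notMem_empty c))
  have hnpos : ∀ j, 0 < nParty E (P j) :=
    fun j => Finset.card_pos.2 ⟨rep j, mem_filter.2 ⟨mem_univ _, hrep j⟩⟩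
  have hfiber : ∀ j : Fin g, (univ.filter fun i => pidx i = j)
      = (univ.filter fun i => E.A i = P j) := by
    intro j
    apply filter_congr
    intro i _
    constructor
    · intro h; rw [hpidx i, h]
    · intro h; exact hPinj (by rw [← hpidx i, h])
  have hgroup : ∀ {M : Type} [AddCommMonoid M] (F : Fin g → M),
      (∑ i : V, F (pidx i)) = ∑ j : Fin g, (nParty E (P j)) • F j := by
    intro M _ F
    rw [← Finset.sum_fiberwise univ pidx (fun i => F (pidx i))]
    refine Finset.sum_congr rfl fun j _ => ?_
    calc ∑ i ∈ univ.filter (fun i => pidx i = j), F (pidx i)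
        = ∑ _i ∈ univ.filter (fun i => pidx i = j), F j := by
          refine sum_congr rfl fun i hi => by rw [(mem_filter.1 hi).2]
      _ = (nParty E (P j)) • F j := by rw [sum_const, hfiber j]; rfl
  -- score formulas
  have hsum_form : ∀ (W : Finset C) (G : V → Finset C),
      (∑ c ∈ W, (univ.filter fun i => c ∈ G i).card) = ∑ i : V, (W ∩ G i).card := by
    intro W G
    have : ∀ c, (univ.filter fun i => c ∈ G i).card = ∑ i : V, if c ∈ G i then 1 else 0 := by
      intro c; rw [Finset.card_filter]
    simp only [this]
    rw [Finset.sum_comm]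
    refine Finset.sum_congr rfl fun i _ => ?_
    rw [← Finset.card_filter, Finset.filter_mem_eq_inter]
  have hsLV : ∀ W : Finset C, sLV E W = ∑ j : Fin g, nParty E (P j) * (W ∩ B j).card := by
    intro W
    have h1 : sLV E W = ∑ i : V, (W ∩ E.L i).card := hsum_form W E.L
    rw [h1, show (∑ i : V, (W ∩ E.L i).card) = ∑ i : V, (W ∩ B (pidx i)).card from
      Finset.sum_congr rfl fun i _ => by rw [hLB i], hgroup (fun j => (W ∩ B j).card)]
    simp [smul_eq_mul]
  have hsAV : ∀ W : Finset C, sAV E W = ∑ j : Fin g, nParty E (P j) * (W ∩ P j).card := by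
    intro W
    have h1 : sAV E W = ∑ i : V, (W ∩ E.A i).card := hsum_form W E.A
    have h2 : ∀ i : V, (W ∩ E.A i).card = (W ∩ P (pidx i)).card := fun i => by rw [hpidx i]
    rw [h1]
    simp only [h2]
    rw [hgroup (fun j => (W ∩ P j).card)]
    simp [smul_eq_mul]
  have hsPAV : ∀ W : Finset C,
      sPAV E W = ∑ j : Fin g, (nParty E (P j) : ℝ) * harm ((W ∩ P j).card) := by
    intro W
    unfold sPAV
    have h2 : ∀ i : V, harm ((W ∩ E.A i).card) = harm ((W ∩ P (pidx i)).card) :=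
      fun i => by rw [hpidx i]
    simp only [h2]
    rw [hgroup (fun j => harm ((W ∩ P j).card))]
    refine Finset.sum_congr rfl fun j _ => ?_
    rw [nsmul_eq_mul]
  -- ℕ-indexed weights and caps
  set nn : ℕ → ℕ := fun j => if h : j < g then nParty E (P ⟨j, h⟩) else 0 with hnn
  have hnn_eq : ∀ j : Fin g, nn j.val = nParty E (P j) := fun j => by
    simp only [hnn, dif_pos j.isLt, Fin.eta]
  have hnn_g : nn g = 0 := dif_neg (lt_irrefl g)
  have hnn_mono : ∀ j, nn (j+1) ≤ nn j := by
    intro j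
    by_cases h1 : j + 1 < g
    · have h0 : j < g := by omega
      simp only [hnn, dif_pos h1, dif_pos h0]
      exact (hanti ⟨j, h0⟩ ⟨j+1, h1⟩ (by simp [Fin.lt_def])).le
    · simp only [hnn, dif_neg h1]; exact Nat.zero_le _
  have hnn_strict : ∀ j, j < g → nn (j+1) < nn j := by
    intro j hj
    by_cases h1 : j + 1 < g
    · simp only [hnn, dif_pos h1, dif_pos hj]
      exact hanti ⟨j, hj⟩ ⟨j+1, h1⟩ (by simp [Fin.lt_def])
    · simp only [hnn, dif_neg h1, dif_pos hj]
      exact hnpos _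
  set bstar : ℕ → ℕ := fun j => if j < q then E.l else if j = q then r else 0 with hbstar
  have hbs_prefix : ∀ m : ℕ, ∑ i ∈ range m, bstar i = min (m * E.l) E.k := by
    intro m; rw [hbstar, hq, hr]; exact bstar_prefix E.l E.k hl0 m
  have hqg : q ≤ g := by
    have h := Nat.div_le_div_right (c := E.l) hgl
    rwa [Nat.mul_div_cancel g hl0] at h
  -- generic committee: block counts
  have hWsum : ∀ W : Finset C, W.card = E.k → ∑ j : Fin g, (W ∩ B j).card ≤ E.k := by
    intro W hW
    rw [← hW]
    calc ∑ j : Fin g, (W ∩ B j).card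
        = (univ.biUnion fun j => W ∩ B j).card :=
          (card_biUnion fun j _ j' _ h =>
            ((hBdisj j j' h).mono inter_subset_right inter_subset_right)).symm
      _ ≤ W.card := card_le_card (Finset.biUnion_subset.2 fun j _ => inter_subset_left)
  have hjcq : 0 < r → (jc : ℕ) = q := by
    intro h
    have hql : E.l * q = q * E.l := Nat.mul_comm _ _
    have hx : (q+1) * E.l = q * E.l + E.l := by ring
    have h1 : E.k + E.l - 1 = (r - 1) + (q + 1) * E.l := by omega
    have h2 : ((r - 1) + (q + 1) * E.l) / E.l = (r-1) / E.l + (q+1) :=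
      Nat.add_mul_div_right _ _ hl0
    have h3 : (r-1)/E.l = 0 := Nat.div_eq_of_lt (by omega)
    rw [h1, h2, h3] at hjc
    omega
  obtain ⟨T, hTsub, hTcard⟩ := Finset.exists_subset_card_eq (s := B jc) (n := r) (by rw [hBcard]; exact hrl.le)
  have hT0 : r = 0 → T = ∅ := fun h => Finset.card_eq_zero.1 (by rw [hTcard, h])
  set Wstar : Finset C := (univ.filter fun j : Fin g => (j : ℕ) < q).biUnion B ∪ T with hWs
  have hfimg : ((univ.filter fun j : Fin g => (j : ℕ) < q).image Fin.val) = range q := by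
    ext m
    simp only [mem_image, mem_filter, mem_univ, true_and, mem_range]
    constructor
    · rintro ⟨j, hj, rfl⟩; exact hj
    · intro hm; exact ⟨⟨m, lt_of_lt_of_le hm hqg⟩, hm, rfl⟩
  have hfcard : (univ.filter fun j : Fin g => (j : ℕ) < q).card = q := by
    rw [← Finset.card_image_of_injective _ Fin.val_injective, hfimg, card_range]
  have hbiTdisj : Disjoint ((univ.filter fun j : Fin g => (j : ℕ) < q).biUnion B) T := by
    rcases Nat.eq_zero_or_pos r with h | h
    · rw [hT0 h]; exact disjoint_empty_right _
    · rw [Finset.disjoint_biUnion_left]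
      intro j hj
      refine (hBdisj j jc fun he => ?_).mono_right hTsub
      rw [he] at hj
      have h2 := (mem_filter.1 hj).2
      have h3 := hjcq h
      omega
  have hbicard : ((univ.filter fun j : Fin g => (j : ℕ) < q).biUnion B).card = q * E.l := by
    rw [card_biUnion (fun j _ j' _ h => hBdisj j j' h),
      Finset.sum_congr rfl fun j _ => hBcard j, sum_const, hfcard, smul_eq_mul]
  have hWcard : Wstar.card = E.k := by
    have hql : E.l * q = q * E.l := Nat.mul_comm _ _
    rw [hWs, card_union_of_disjoint hbiTdisj, hbicard, hTcard]
    omega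
  have hWstarB : ∀ j : Fin g, (Wstar ∩ B j).card = bstar (j : ℕ) := by
    intro j
    rcases lt_trichotomy ((j : ℕ)) q with h | h | h
    · have hsub : B j ⊆ Wstar :=
        (Finset.subset_biUnion_of_mem B (mem_filter.2 ⟨mem_univ _, h⟩)).trans
          Finset.subset_union_left
      rw [Finset.inter_eq_right.2 hsub, hBcard]
      simp only [hbstar]
      rw [if_pos h]
    · have hTBj : T ⊆ B j := by
        rcases Nat.eq_zero_or_pos r with h0 | h0
        · rw [hT0 h0]; exact empty_subset _
        · have he : jc = j := Fin.ext (by rw [hjcq h0, h])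
          exact he ▸ hTsub
      have heq : Wstar ∩ B j = T := by
        apply Finset.Subset.antisymm
        · intro c hc
          obtain ⟨hc1, hc2⟩ := mem_inter.1 hc
          rcases Finset.mem_union.1 hc1 with hc3 | hc3
          · obtain ⟨j', hj', hcj'⟩ := Finset.mem_biUnion.1 hc3
            have hne : j' ≠ j := fun he => by
              rw [he] at hj'; have := (mem_filter.1 hj').2; omega
            exact absurd hc2 (Finset.disjoint_left.1 (hBdisj j' j hne) hcj')
          · exact hc3
        · exact subset_inter Finset.subset_union_right hTBj
      rw [heq, hTcard]
      simp only [hbstar]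
      rw [if_neg (by omega), if_pos h]
    · have heq : Wstar ∩ B j = ∅ := by
        rw [Finset.eq_empty_iff_forall_notMem]
        intro c hc
        obtain ⟨hc1, hc2⟩ := mem_inter.1 hc
        rcases Finset.mem_union.1 hc1 with hc3 | hc3
        · obtain ⟨j', hj', hcj'⟩ := Finset.mem_biUnion.1 hc3
          have hne : j' ≠ j := fun he => by
            rw [he] at hj'; have := (mem_filter.1 hj').2; omega
          exact absurd hc2 (Finset.disjoint_left.1 (hBdisj j' j hne) hcj')
        · rcases Nat.eq_zero_or_pos r with h0 | h0
          · rw [hT0 h0] at hc3; exact notMem_empty c hc3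
          · have hne : jc ≠ j := fun he => by
              have := hjcq h0; rw [← he] at h; omega
            exact absurd hc2 (Finset.disjoint_left.1 (hBdisj jc j hne) (hTsub hc3))
      rw [heq, card_empty]
      simp only [hbstar]
      rw [if_neg (by omega), if_neg (by omega)]
  have hconv : ∀ W : Finset C,
      (∑ j : Fin g, nParty E (P j) * (W ∩ B j).card)
      = ∑ m ∈ range g, nn m * (if h : m < g then (W ∩ B ⟨m, h⟩).card else 0) := by
    intro W
    rw [← Fin.sum_univ_eq_sum_range (fun m => nn m * (if h : m < g then (W ∩ B ⟨m, h⟩).card else 0)) g]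
    refine Finset.sum_congr rfl fun j _ => ?_
    rw [hnn_eq j, dif_pos j.isLt, Fin.eta]
  have hconv2 : (∑ j : Fin g, nParty E (P j) * bstar (j : ℕ)) = ∑ m ∈ range g, nn m * bstar m := by
    rw [← Fin.sum_univ_eq_sum_range (fun m => nn m * bstar m) g]
    exact Finset.sum_congr rfl fun j _ => by rw [hnn_eq j]
  have hdomW : ∀ W : Finset C, W.card = E.k → ∀ m, m ≤ g →
      ∑ i ∈ range m, (if h : i < g then (W ∩ B ⟨i, h⟩).card else 0) ≤ ∑ i ∈ range m, bstar i := by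
    intro W hW m hm
    rw [hbs_prefix m]
    apply le_min
    · calc ∑ i ∈ range m, (if h : i < g then (W ∩ B ⟨i, h⟩).card else 0)
          ≤ ∑ _i ∈ range m, E.l := by
            refine sum_le_sum fun i _ => ?_
            split
            · exact (card_le_card inter_subset_right).trans (hBcard _).le
            · exact Nat.zero_le _
        _ = m * E.l := by rw [sum_const, card_range, smul_eq_mul]
    · calc ∑ i ∈ range m, (if h : i < g then (W ∩ B ⟨i, h⟩).card else 0)
          ≤ ∑ i ∈ range g, (if h : i < g then (W ∩ B ⟨i, h⟩).card else 0) :=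
            sum_le_sum_of_subset (range_subset_range.2 hm)
        _ = ∑ j : Fin g, (W ∩ B j).card := by
            rw [← Fin.sum_univ_eq_sum_range (fun m => if h : m < g then (W ∩ B ⟨m, h⟩).card else 0) g]
            exact sum_congr rfl fun j _ => by rw [dif_pos j.isLt, Fin.eta]
        _ ≤ E.k := hWsum W hW
  have hsLV_star : sLV E Wstar = ∑ m ∈ range g, nn m * bstar m := by
    rw [hsLV Wstar, ← hconv2]
    exact Finset.sum_congr rfl fun j _ => by rw [hWstarB j]
  have hWstarWin : Wstar ∈ LVwin E := by
    refine ⟨hWcard, fun W' hW' => ?_⟩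
    rw [hsLV W', hconv W', hsLV_star]
    exact score_le g nn _ bstar hnn_mono hnn_g (hdomW W' hW')
  have hLVchar : ∀ W, W ∈ LVwin E → ∀ j : Fin g, (W ∩ B j).card = bstar (j : ℕ) := by
    intro W hW j
    by_contra hne
    have hlt : sLV E W < sLV E Wstar := by
      rw [hsLV W, hconv W, hsLV_star]
      refine score_lt g nn _ bstar hnn_mono hnn_g hnn_strict (hdomW W hW.1) (j : ℕ) j.isLt ?_
      intro heq
      apply hne
      rwa [dif_pos j.isLt, Fin.eta] at heq
    have := hW.2 Wstar hWcard
    omega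
  have hbs_total : ∑ i ∈ range g, bstar i = E.k := by
    rw [hbs_prefix g]; exact min_eq_right hgl
  have hLVcover : ∀ W, W ∈ LVwin E → ∀ j : Fin g, (W ∩ P j) = (W ∩ B j) := by
    intro W hW
    have hcardsum : ∑ j : Fin g, (W ∩ B j).card = E.k := by
      rw [Finset.sum_congr rfl fun j _ => hLVchar W hW j, Fin.sum_univ_eq_sum_range bstar g,
        hbs_total]
    have hWeq : W = univ.biUnion fun j : Fin g => W ∩ B j := by
      refine (Finset.eq_of_subset_of_card_le
        (Finset.biUnion_subset.2 fun j _ => inter_subset_left) ?_).symm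
      rw [card_biUnion (fun j _ j' _ h =>
        (hBdisj j j' h).mono inter_subset_right inter_subset_right), hcardsum, hW.1]
    intro j
    apply Finset.Subset.antisymm
    · intro c hc
      obtain ⟨hc1, hc2⟩ := mem_inter.1 hc
      have hc3 := hc1
      rw [hWeq] at hc3
      obtain ⟨j', _, hcj'⟩ := Finset.mem_biUnion.1 hc3
      have hj' : j' = j := by
        by_contra hne
        have hd := hPdisj j' j hne
        have hmem : c ∈ P j' ∩ P j := mem_inter.2 ⟨hBsub j' (mem_inter.1 hcj').2, hc2⟩
        rw [hd] at hmem
        exact notMem_empty c hmem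
      exact mem_inter.2 ⟨hc1, hj' ▸ (mem_inter.1 hcj').2⟩
    · exact inter_subset_inter (Finset.Subset.refl W) (hBsub j)
  have hharm0 : harm 0 = 0 := by simp [harm]
  have hnum : ∀ W, W ∈ LVwin E → sPAV E W =
      (∑ j ∈ univ.filter (fun j : Fin g => (j : ℕ) < q), (nParty E (P j) : ℝ) * harm E.l) +
        (nParty E (P jc) : ℝ) * harm r := by
    intro W hW
    rw [hsPAV W]
    have h1 : ∀ j : Fin g, ((W ∩ P j).card) = (bstar ((j : ℕ))) := fun j => by
      rw [hLVcover W hW j, hLVchar W hW j]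
    rw [Finset.sum_congr rfl fun j _ => by rw [h1 j]]
    rw [← Finset.sum_filter_add_sum_filter_not univ (fun j : Fin g => (j : ℕ) < q)]
    congr 1
    · refine Finset.sum_congr rfl fun j hj => ?_
      have h2 : bstar ((j : ℕ)) = E.l := by
        simp only [hbstar]; rw [if_pos (mem_filter.1 hj).2]
      rw [h2]
    · rcases Nat.eq_zero_or_pos r with h0 | h0
      · rw [h0, hharm0, mul_zero]
        refine Finset.sum_eq_zero fun j hj => ?_
        have hj2 : ¬ ((j : ℕ) < q) := (mem_filter.1 hj).2
        have h3 : bstar ((j : ℕ)) = 0 := by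
          simp only [hbstar]; rw [if_neg hj2]; split <;> omega
        rw [h3, hharm0, mul_zero]
      · rw [Finset.sum_eq_single jc]
        · have h3 : bstar ((jc : ℕ)) = r := by
            simp only [hbstar]; rw [hjcq h0, if_neg (lt_irrefl q), if_pos rfl]
          rw [h3]
        · intro j hj hne
          have hj2 : ¬ ((j : ℕ) < q) := (mem_filter.1 hj).2
          have hjne : (j : ℕ) ≠ q := fun he => hne (Fin.ext (by rw [he, hjcq h0]))
          have h3 : bstar ((j : ℕ)) = 0 := by
            simp only [hbstar]; rw [if_neg hj2, if_neg hjne]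
          rw [h3, hharm0, mul_zero]
        · intro hjc'
          exact absurd (mem_filter.2 ⟨mem_univ _, by rw [hjcq h0]; exact lt_irrefl q⟩) hjc'
  set n0 : ℕ := nParty E (P ⟨0, hg⟩) with hn0
  have hPsum : ∀ W : Finset C, W.card = E.k → ∑ j : Fin g, (W ∩ P j).card ≤ E.k := by
    intro W hW
    rw [← hW]
    calc ∑ j : Fin g, (W ∩ P j).card
        = (univ.biUnion fun j => W ∩ P j).card :=
          (card_biUnion fun j _ j' _ h => Finset.disjoint_left.2 fun c hc hc' => by
            have hm : c ∈ P j ∩ P j' := mem_inter.2 ⟨(mem_inter.1 hc).2, (mem_inter.1 hc').2⟩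
            rw [hPdisj j j' h] at hm
            exact notMem_empty c hm).symm
      _ ≤ W.card := card_le_card (Finset.biUnion_subset.2 fun j _ => inter_subset_left)
  have hzlt : ∀ j : Fin g, j ≠ ⟨0, hg⟩ → (⟨0, hg⟩ : Fin g) < j := by
    intro j hj
    have : 0 < (j : ℕ) := Nat.pos_of_ne_zero fun h0 => hj (Fin.ext h0)
    simpa [Fin.lt_def] using this
  have hnle : ∀ j : Fin g, nParty E (P j) ≤ n0 := by
    intro j
    rcases eq_or_ne j ⟨0, hg⟩ with h | h
    · rw [h]
    · exact (hanti ⟨0, hg⟩ j (hzlt j h)).le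
  have hAVub : ∀ W : Finset C, W.card = E.k → sAV E W ≤ n0 * E.k := by
    intro W hW
    rw [hsAV W]
    calc ∑ j : Fin g, nParty E (P j) * (W ∩ P j).card
        ≤ ∑ j : Fin g, n0 * (W ∩ P j).card :=
          sum_le_sum fun j _ => Nat.mul_le_mul_right _ (hnle j)
      _ = n0 * ∑ j : Fin g, (W ∩ P j).card := (Finset.mul_sum _ _ _).symm
      _ ≤ n0 * E.k := Nat.mul_le_mul_left _ (hPsum W hW)
  obtain ⟨W0, hW0sub, hW0card⟩ := Finset.exists_subset_card_eq (s := P ⟨0, hg⟩) (n := E.k) hP1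
  have hdisj0 : ∀ j : Fin g, j ≠ ⟨0, hg⟩ → ∀ W ⊆ P ⟨0, hg⟩, W ∩ P j = ∅ := by
    intro j hj W hWsub
    rw [Finset.eq_empty_iff_forall_notMem]
    intro c hc
    have hm : c ∈ P ⟨0, hg⟩ ∩ P j := mem_inter.2 ⟨hWsub (mem_inter.1 hc).1, (mem_inter.1 hc).2⟩
    rw [hPdisj _ _ (Ne.symm hj)] at hm
    exact notMem_empty c hm
  have hW0val : sAV E W0 = n0 * E.k := by
    rw [hsAV W0, Finset.sum_eq_single ⟨0, hg⟩]
    · rw [Finset.inter_eq_left.2 hW0sub, hW0card]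
    · intro j _ hne
      rw [hdisj0 j hne W0 hW0sub, card_empty, mul_zero]
    · intro h; exact absurd (mem_univ _) h
  have hW0win : W0 ∈ AVwin E := ⟨hW0card, fun W' hW' => (hAVub W' hW').trans hW0val.ge⟩
  have hAVchar : ∀ W, W ∈ AVwin E → W ⊆ P ⟨0, hg⟩ := by
    intro W hW
    have hval : sAV E W = n0 * E.k :=
      le_antisymm (hAVub W hW.1) (hW0val ▸ hW.2 W0 hW0card)
    have hm0le : (W ∩ P ⟨0, hg⟩).card ≤ E.k := hW.1 ▸ card_le_card inter_subset_left
    rcases eq_or_lt_of_le hm0le with hm0 | hm0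
    · have heq : W ∩ P ⟨0, hg⟩ = W :=
        Finset.eq_of_subset_of_card_le inter_subset_left (le_of_eq (hW.1.trans hm0.symm))
      intro c hc
      rw [← heq] at hc
      exact (mem_inter.1 hc).2
    · exfalso
      set m0 := (W ∩ P ⟨0, hg⟩).card with hm0'
      set t := ∑ j ∈ univ.erase ⟨0, hg⟩, (W ∩ P j).card with ht
      set S := ∑ j ∈ univ.erase ⟨0, hg⟩, nParty E (P j) * (W ∩ P j).card with hS
      have hsplit : sAV E W = S + n0 * m0 := by
        rw [hsAV W, ← Finset.sum_erase_add univ _ (mem_univ (⟨0, hg⟩ : Fin g))]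
      have hSm : t + m0 ≤ E.k := by
        have h := hPsum W hW.1
        rw [← Finset.sum_erase_add univ _ (mem_univ (⟨0, hg⟩ : Fin g))] at h
        exact h
      have hn0pos : 0 < n0 := hnpos ⟨0, hg⟩
      set a1 := n0 - 1 with ha1'
      have ha1 : n0 = a1 + 1 := by omega
      have hSle : S ≤ a1 * t := by
        rw [hS, ht, Finset.mul_sum]
        refine sum_le_sum fun j hj => ?_
        refine Nat.mul_le_mul_right _ ?_
        have hne : j ≠ ⟨0, hg⟩ := (Finset.mem_erase.1 hj).1
        have hlt := hanti ⟨0, hg⟩ j (hzlt j hne)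
        omega
      have hu : ∃ u, m0 + u = E.k ∧ 0 < u := ⟨E.k - m0, by omega, by omega⟩
      obtain ⟨u, hu1, hu2⟩ := hu
      have e1 : n0 * u = a1 * u + u := by rw [ha1]; ring
      have e2 : n0 * E.k = n0 * m0 + (a1 * u + u) := by rw [← hu1, mul_add, e1]
      have e3 : a1 * t ≤ a1 * u := Nat.mul_le_mul_left _ (by omega)
      have hlt : S + n0 * m0 < n0 * E.k := by linarith
      rw [← hsplit, hval] at hlt
      exact lt_irrefl _ hlt
  have hden : ∀ W, W ∈ AVwin E → sPAV E W = (n0 : ℝ) * harm E.k := by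
    intro W hW
    have hsub := hAVchar W hW
    rw [hsPAV W, Finset.sum_eq_single ⟨0, hg⟩]
    · rw [Finset.inter_eq_left.2 hsub, hW.1]
    · intro j _ hne
      rw [hdisj0 j hne W hsub, card_empty, hharm0, mul_zero]
    · intro h; exact absurd (mem_univ _) h
  have hLVset : sPAV E '' LVwin E =
      {(∑ j ∈ univ.filter (fun j : Fin g => (j : ℕ) < q), (nParty E (P j) : ℝ) * harm E.l) +
        (nParty E (P jc) : ℝ) * harm r} := by
    apply Set.eq_singleton_iff_unique_mem.2
    refine ⟨⟨Wstar, hWstarWin, hnum Wstar hWstarWin⟩, ?_⟩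
    rintro x ⟨W, hW, rfl⟩
    exact hnum W hW
  have hAVset : sPAV E '' AVwin E = {(n0 : ℝ) * harm E.k} := by
    apply Set.eq_singleton_iff_unique_mem.2
    refine ⟨⟨W0, hW0win, hden W0 hW0win⟩, ?_⟩
    rintro x ⟨W, hW, rfl⟩
    exact hden W hW
  rw [hLVset, hAVset, csInf_singleton, csSup_singleton]
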